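/- Let n be a positive integer and let ℚ(v) be the field of rational functions over ℚ in an indeterminate v, with quantum binomial coefficients [m choose p] built from the balanced quantum integers [t] = (v^t - v^{-t})/(v - v^{-1}). Let U(sl₂) be the ℚ(v)-algebra presented by generators E, F, K, K' and relations KK' = 1 = K'K, KE = v²EK, KF = v⁻²FK, (v - v⁻¹)(EF - FE) = K - K'. Let V_n be the ℚ(v)-algebra presented by generators E⁺, E⁻, K, K' and relations: KK' = 1 = K'K; KE⁺ = v²E⁺K; KE⁻ = v⁻²E⁻K; (v - v⁻¹)(E⁺E⁻ - E⁻E⁺) = K - K'; Σ_{p=0}^{2n+1} (-1)^p [2n+1 choose p] (E⁺)^p E⁻ (E⁺)^{2n+1-p} = 0; and Σ_{p=0}^{2n+1} (-1)^p [2n+1 choose p] (E⁻)^p E⁺ (E⁻)^{2n+1-p} = 0. Then there is a unique ℚ(v)-algebra isomorphism φ: U(sl₂) → V_n with φ(E) = E⁺, φ(F) = E⁻, φ(K) = K, φ(K') = K'. -/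

import Mathlib

open FreeAlgebra

/-- Balanced quantum integer `[m] = (v^m - v^{-m})/(v - v⁻¹)`. -/
noncomputable def qint {F : Type*} [Field F] (v : F) (m : ℤ) : F :=
  (v ^ m - v ^ (-m)) / (v - v⁻¹)

/-- Quantum factorial `[m]! = ∏_{t=1}^m [t]`. -/
noncomputable def qfact {F : Type*} [Field F] (v : F) : ℕ → F
  | 0 => 1
  | m + 1 => qfact v m * qint v (m + 1)

/-- Quantum binomial coefficient `[m choose t] = [m]!/([t]![m-t]!)`. -/
noncomputable def qbinom {F : Type*} [Field F] (v : F) (m t : ℕ) : F :=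
  qfact v m / (qfact v t * qfact v (m - t))

/-- The field ℚ(v) of rational functions over ℚ. -/
abbrev Kv : Type := RatFunc ℚ

/-- The indeterminate `v` of ℚ(v). -/
noncomputable def vv : Kv := RatFunc.X

/-- Generators of the quantized enveloping algebra U(sl₂). -/
inductive UGen | E | F | K | K'

/-- Generators of the algebra V_n. -/
inductive VGen | Ep | Em | K | K'

/-- Defining relations of U(sl₂). -/
inductive URel : FreeAlgebra Kv UGen → FreeAlgebra Kv UGen → Prop
  | KK' : URel (ι Kv UGen.K * ι Kv UGen.K') 1
  | K'K : URel (ι Kv UGen.K' * ι Kv UGen.K) 1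
  | KE : URel (ι Kv UGen.K * ι Kv UGen.E) (vv ^ 2 • (ι Kv UGen.E * ι Kv UGen.K))
  | KF : URel (ι Kv UGen.K * ι Kv UGen.F) ((vv⁻¹) ^ 2 • (ι Kv UGen.F * ι Kv UGen.K))
  | EF : URel ((vv - vv⁻¹) • (ι Kv UGen.E * ι Kv UGen.F - ι Kv UGen.F * ι Kv UGen.E))
      (ι Kv UGen.K - ι Kv UGen.K')

/-- Defining relations of V_n, including the higher quantum Serre relations of
order `2n+1` coming from the Cartan matrix `[[2, -2n], [-2n, 2]]`. -/
inductive VnRel (n : ℕ) : FreeAlgebra Kv VGen → FreeAlgebra Kv VGen → Prop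
  | KK' : VnRel n (ι Kv VGen.K * ι Kv VGen.K') 1
  | K'K : VnRel n (ι Kv VGen.K' * ι Kv VGen.K) 1
  | KE : VnRel n (ι Kv VGen.K * ι Kv VGen.Ep) (vv ^ 2 • (ι Kv VGen.Ep * ι Kv VGen.K))
  | KF : VnRel n (ι Kv VGen.K * ι Kv VGen.Em) ((vv⁻¹) ^ 2 • (ι Kv VGen.Em * ι Kv VGen.K))
  | EF : VnRel n ((vv - vv⁻¹) • (ι Kv VGen.Ep * ι Kv VGen.Em - ι Kv VGen.Em * ι Kv VGen.Ep))
      (ι Kv VGen.K - ι Kv VGen.K')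
  | serreA : VnRel n
      (∑ p ∈ Finset.range (2 * n + 2),
        ((-1 : Kv) ^ p * qbinom vv (2 * n + 1) p) •
          (ι Kv VGen.Ep ^ p * ι Kv VGen.Em * ι Kv VGen.Ep ^ (2 * n + 1 - p))) 0
  | serreB : VnRel n
      (∑ p ∈ Finset.range (2 * n + 2),
        ((-1 : Kv) ^ p * qbinom vv (2 * n + 1) p) •
          (ι Kv VGen.Em ^ p * ι Kv VGen.Ep * ι Kv VGen.Em ^ (2 * n + 1 - p))) 0

lemma hv : vv ≠ 0 := RatFunc.X_ne_zero

lemma vv_pow_ne_one {m : ℕ} (hm : 0 < m) : vv ^ m ≠ 1 := by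
  intro h
  have h1 : (Polynomial.X : Polynomial ℚ) ^ m = 1 := by
    apply RatFunc.algebraMap_injective ℚ
    rw [map_pow, map_one, RatFunc.algebraMap_X]
    exact h
  have := congrArg Polynomial.natDegree h1
  simp [Polynomial.natDegree_X_pow] at this
  omega

lemma hw : vv - vv⁻¹ ≠ 0 := by
  intro h
  have h2 : vv * vv = 1 := by
    nth_rewrite 1 [sub_eq_zero.mp h]; exact inv_mul_cancel₀ hv
  exact vv_pow_ne_one (m := 2) (by norm_num) (by rw [pow_two]; exact h2)

lemma qint_natCast (p : ℕ) : qint vv p = (vv ^ p - (vv ^ p)⁻¹) / (vv - vv⁻¹) := by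
  rw [qint, zpow_natCast, zpow_neg, zpow_natCast]

lemma qint_ne_zero {p : ℕ} (hp : 0 < p) : qint vv p ≠ 0 := by
  rw [qint_natCast]
  apply div_ne_zero _ hw
  intro h
  have h1 := sub_eq_zero.mp h
  have h2 : vv ^ p * vv ^ p = 1 := by
    nth_rewrite 1 [h1]; exact inv_mul_cancel₀ (pow_ne_zero p hv)
  exact vv_pow_ne_one (m := p + p) (by omega) (by rw [pow_add]; exact h2)

lemma qfact_ne_zero (m : ℕ) : qfact vv m ≠ 0 := by
  induction m with
  | zero => simp [qfact]
  | succ s ih => exact mul_ne_zero ih (by exact_mod_cast qint_ne_zero (Nat.succ_pos s))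

lemma qint_one : qint vv 1 = 1 := by
  rw [qint]
  norm_num [zpow_one]
  exact hw

lemma qint_add (a b : ℤ) :
    qint vv (a + b) = vv ^ b * qint vv a + vv ^ (-a) * qint vv b := by
  have hA : vv ^ a ≠ 0 := zpow_ne_zero _ hv
  have hB : vv ^ b ≠ 0 := zpow_ne_zero _ hv
  simp only [qint, zpow_neg, neg_add, zpow_add₀ hv, ← mul_div_assoc]
  rw [← add_div]
  congr 1
  field_simp
  ring

lemma qint_add' (a b : ℤ) :
    qint vv (a + b) = vv ^ (-b) * qint vv a + vv ^ a * qint vv b := by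
  have hA : vv ^ a ≠ 0 := zpow_ne_zero _ hv
  have hB : vv ^ b ≠ 0 := zpow_ne_zero _ hv
  simp only [qint, zpow_neg, neg_add, zpow_add₀ hv, ← mul_div_assoc]
  rw [← add_div]
  congr 1
  field_simp
  ring

lemma qfact_succ (m : ℕ) : qfact vv (m + 1) = qfact vv m * qint vv ((m : ℤ) + 1) := by
  rw [qfact]

lemma qbinom_zero (m : ℕ) : qbinom vv m 0 = 1 := by
  simp [qbinom, qfact, div_self (qfact_ne_zero m)]

lemma qbinom_self (m : ℕ) : qbinom vv m m = 1 := by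
  simp [qbinom, qfact, div_self (qfact_ne_zero m)]

lemma pascal₁ (m j : ℕ) (h : j < m) :
    qbinom vv (m + 1) (j + 1) =
      vv ^ ((j : ℤ) + 1) * qbinom vv m (j + 1) + vv ^ ((j : ℤ) - m) * qbinom vv m j := by
  obtain ⟨s, rfl⟩ : ∃ s, m = j + 1 + s := ⟨m - (j + 1), by omega⟩
  have e1 : j + 1 + s + 1 - (j + 1) = s + 1 := by omega
  have e2 : j + 1 + s - (j + 1) = s := by omega
  have e3 : j + 1 + s - j = s + 1 := by omega
  have key : qint vv ((j + 1 + s + 1 : ℕ) : ℤ) =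
      vv ^ ((j : ℤ) + 1) * qint vv ((s : ℤ) + 1) + vv ^ (-((s : ℤ) + 1)) * qint vv ((j : ℤ) + 1) := by
    have := qint_add ((s : ℤ) + 1) ((j : ℤ) + 1)
    rw [show ((s:ℤ)+1) + ((j:ℤ)+1) = ((j + 1 + s + 1 : ℕ) : ℤ) by push_cast; ring] at this
    rw [this]
  rw [qbinom, qbinom, qbinom, e1, e2, e3,
    show j + 1 + s + 1 = (j + s + 1) + 1 by omega, qfact_succ (j + s + 1),
    show ((j + s + 1 : ℕ) : ℤ) + 1 = ((j + 1 + s + 1 : ℕ) : ℤ) by push_cast; ring, key,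
    qfact_succ j, qfact_succ s, show j + 1 + s = (j + s) + 1 by omega, qfact_succ (j + s)]
  have hj := qfact_ne_zero j
  have hs := qfact_ne_zero s
  have hjs := qfact_ne_zero (j + s)
  have hqj : qint vv ((j : ℤ) + 1) ≠ 0 := by
    have := qint_ne_zero (p := j + 1) (by omega); rwa [show ((j + 1 : ℕ) : ℤ) = (j : ℤ) + 1 by push_cast; ring] at this
  have hqs : qint vv ((s : ℤ) + 1) ≠ 0 := by
    have := qint_ne_zero (p := s + 1) (by omega); rwa [show ((s + 1 : ℕ) : ℤ) = (s : ℤ) + 1 by push_cast; ring] at this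
  have hz : vv ^ (-((s : ℤ) + 1)) ≠ 0 := zpow_ne_zero _ hv
  rw [show (j:ℤ) - ((j + s + 1 : ℕ) : ℤ) = -((s:ℤ)+1) by push_cast; ring]
  field_simp

lemma pascal₂ (m j : ℕ) (h : j < m) :
    qbinom vv (m + 1) (j + 1) =
      vv ^ (-((j : ℤ) + 1)) * qbinom vv m (j + 1) + vv ^ ((m : ℤ) - j) * qbinom vv m j := by
  obtain ⟨s, rfl⟩ : ∃ s, m = j + 1 + s := ⟨m - (j + 1), by omega⟩
  have e1 : j + 1 + s + 1 - (j + 1) = s + 1 := by omega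
  have e2 : j + 1 + s - (j + 1) = s := by omega
  have e3 : j + 1 + s - j = s + 1 := by omega
  have key : qint vv ((j + 1 + s + 1 : ℕ) : ℤ) =
      vv ^ (-((j : ℤ) + 1)) * qint vv ((s : ℤ) + 1) + vv ^ ((s : ℤ) + 1) * qint vv ((j : ℤ) + 1) := by
    have := qint_add' ((s : ℤ) + 1) ((j : ℤ) + 1)
    rw [show ((s:ℤ)+1) + ((j:ℤ)+1) = ((j + 1 + s + 1 : ℕ) : ℤ) by push_cast; ring] at this
    rw [this]
  rw [qbinom, qbinom, qbinom, e1, e2, e3,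
    show j + 1 + s + 1 = (j + s + 1) + 1 by omega, qfact_succ (j + s + 1),
    show ((j + s + 1 : ℕ) : ℤ) + 1 = ((j + 1 + s + 1 : ℕ) : ℤ) by push_cast; ring, key,
    qfact_succ j, qfact_succ s, show j + 1 + s = (j + s) + 1 by omega, qfact_succ (j + s)]
  have hj := qfact_ne_zero j
  have hs := qfact_ne_zero s
  have hjs := qfact_ne_zero (j + s)
  have hqj : qint vv ((j : ℤ) + 1) ≠ 0 := by
    have := qint_ne_zero (p := j + 1) (by omega); rwa [show ((j + 1 : ℕ) : ℤ) = (j : ℤ) + 1 by push_cast; ring] at this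
  have hqs : qint vv ((s : ℤ) + 1) ≠ 0 := by
    have := qint_ne_zero (p := s + 1) (by omega); rwa [show ((s + 1 : ℕ) : ℤ) = (s : ℤ) + 1 by push_cast; ring] at this
  have hz : vv ^ (-((j : ℤ) + 1)) ≠ 0 := zpow_ne_zero _ hv
  rw [show ((j + s + 1 : ℕ) : ℤ) - (j:ℤ) = ((s:ℤ)+1) by push_cast; ring]
  field_simp

noncomputable def qsum (M : ℕ) (c : ℤ) : Kv :=
  ∑ q ∈ Finset.range (M + 1), (-1 : Kv) ^ q * vv ^ (c * q) * qbinom vv M q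

lemma qsum_succ₁ (m : ℕ) (c : ℤ) :
    qsum (m + 1) c = (1 - vv ^ (c - m)) * qsum m (c + 1) := by
  have key : ∀ q ∈ Finset.range m,
      (-1 : Kv) ^ (q + 1) * vv ^ (c * ((q + 1 : ℕ) : ℤ)) * qbinom vv (m + 1) (q + 1) =
        (-1 : Kv) ^ (q + 1) * vv ^ ((c + 1) * ((q + 1 : ℕ) : ℤ)) * qbinom vv m (q + 1)
          - vv ^ (c - m) * ((-1 : Kv) ^ q * vv ^ ((c + 1) * q) * qbinom vv m q) := by
    intro q hq
    rw [Finset.mem_range] at hq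
    rw [pascal₁ m q hq]
    push_cast
    rw [show (c * (q + 1) : ℤ) = c * q + c by ring]
    rw [show ((c + 1) * (q + 1) : ℤ) = c * q + c + (q + 1) by ring]
    rw [show ((c + 1) * q : ℤ) = c * q + q by ring]
    simp only [zpow_add₀ hv, pow_succ]
    rw [show ((q : ℤ) - m) = -((m : ℤ)) + q by ring, show (c - (m:ℤ)) = c + -(m:ℤ) by ring]
    simp only [zpow_add₀ hv, zpow_natCast]
    ring
  rw [qsum, Finset.sum_range_succ', Finset.sum_range_succ, Finset.sum_congr rfl key]
  rw [Finset.sum_sub_distrib, ← Finset.mul_sum]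
  have s1 : ∑ q ∈ Finset.range m, (-1 : Kv) ^ (q + 1) * vv ^ ((c + 1) * ((q + 1 : ℕ) : ℤ)) * qbinom vv m (q + 1)
      = qsum m (c + 1) - (-1 : Kv) ^ 0 * vv ^ ((c + 1) * ((0 : ℕ) : ℤ)) * qbinom vv m 0 := by
    rw [qsum, Finset.sum_range_succ']; ring
  have s2 : ∑ q ∈ Finset.range m, (-1 : Kv) ^ q * vv ^ ((c + 1) * q) * qbinom vv m q
      = qsum m (c + 1) - (-1 : Kv) ^ m * vv ^ ((c + 1) * m) * qbinom vv m m := by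
    rw [qsum, Finset.sum_range_succ]; ring
  rw [s1, s2, qbinom_zero, qbinom_self, qbinom_zero, qbinom_self]
  push_cast
  rw [show (c * ((m : ℤ) + 1)) = (c - m) + ((c + 1) * m) by ring]
  simp only [zpow_add₀ hv, mul_zero, zpow_zero, pow_succ]
  ring

lemma qsum_succ₂ (m : ℕ) (c : ℤ) :
    qsum (m + 1) c = (1 - vv ^ (c + m)) * qsum m (c - 1) := by
  have key : ∀ q ∈ Finset.range m,
      (-1 : Kv) ^ (q + 1) * vv ^ (c * ((q + 1 : ℕ) : ℤ)) * qbinom vv (m + 1) (q + 1) =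
        (-1 : Kv) ^ (q + 1) * vv ^ ((c - 1) * ((q + 1 : ℕ) : ℤ)) * qbinom vv m (q + 1)
          - vv ^ (c + m) * ((-1 : Kv) ^ q * vv ^ ((c - 1) * q) * qbinom vv m q) := by
    intro q hq
    rw [Finset.mem_range] at hq
    rw [pascal₂ m q hq]
    push_cast
    rw [show (c * (q + 1) : ℤ) = c * q + c by ring]
    rw [show ((c - 1) * (q + 1) : ℤ) = c * q + c + (-((q:ℤ) + 1)) by ring]
    rw [show ((c - 1) * q : ℤ) = c * q + -(q:ℤ) by ring]
    simp only [zpow_add₀ hv, pow_succ]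
    rw [show ((m : ℤ) - q) = (m : ℤ) + -(q:ℤ) by ring]
    simp only [zpow_add₀ hv, zpow_natCast]
    ring
  rw [qsum, Finset.sum_range_succ', Finset.sum_range_succ, Finset.sum_congr rfl key]
  rw [Finset.sum_sub_distrib, ← Finset.mul_sum]
  have s1 : ∑ q ∈ Finset.range m, (-1 : Kv) ^ (q + 1) * vv ^ ((c - 1) * ((q + 1 : ℕ) : ℤ)) * qbinom vv m (q + 1)
      = qsum m (c - 1) - (-1 : Kv) ^ 0 * vv ^ ((c - 1) * ((0 : ℕ) : ℤ)) * qbinom vv m 0 := by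
    rw [qsum, Finset.sum_range_succ']; ring
  have s2 : ∑ q ∈ Finset.range m, (-1 : Kv) ^ q * vv ^ ((c - 1) * q) * qbinom vv m q
      = qsum m (c - 1) - (-1 : Kv) ^ m * vv ^ ((c - 1) * m) * qbinom vv m m := by
    rw [qsum, Finset.sum_range_succ]; ring
  rw [s1, s2, qbinom_zero, qbinom_self, qbinom_zero, qbinom_self]
  push_cast
  rw [show (c * ((m : ℤ) + 1)) = (c + m) + ((c - 1) * m) by ring]
  simp only [zpow_add₀ hv, mul_zero, zpow_zero, pow_succ]
  ring

lemma qsum_eq_zero : ∀ (M : ℕ) (c : ℤ), 1 ≤ M → |c| ≤ (M : ℤ) - 1 →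
    (c - M + 1) % 2 = 0 → qsum M c = 0 := by
  intro M
  induction M with
  | zero => intro c h; omega
  | succ m ih =>
    intro c _ h2 h3
    rw [abs_le] at h2
    push_cast at h2 h3
    match m, ih, h2, h3 with
    | 0, _, h2, h3 =>
      have hc : c = 0 := by omega
      subst hc
      simp [qsum, Finset.sum_range_succ, qbinom_zero, qbinom_self]
    | (s+1), ih, h2, h3 =>
      by_cases hc : c ≤ (s : ℤ) - 1
      · rw [qsum_succ₁, ih (c + 1) (by omega)
          (abs_le.mpr (by push_cast; omega)) (by push_cast; omega), mul_zero]
      · rw [qsum_succ₂, ih (c - 1) (by omega)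
          (abs_le.mpr (by push_cast; omega)) (by push_cast; omega), mul_zero]

lemma qint_ofNat (p : ℕ) (a : ℤ) (h : a = (p : ℤ)) :
    qint vv a = (vv ^ p - (vv ^ p)⁻¹) / (vv - vv⁻¹) := by
  rw [h, qint_natCast]

lemma qbinom_mul_qint (m q : ℕ) (h : q ≤ m) :
    qbinom vv (m + 1) (q + 1) * qint vv ((q : ℤ) + 1) =
      qint vv ((m : ℤ) + 1) * qbinom vv m q := by
  have e1 : m + 1 - (q + 1) = m - q := by omega
  rw [qbinom, qbinom, e1, qfact_succ m, qfact_succ q]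
  have h1 := qfact_ne_zero q
  have h2 := qfact_ne_zero (m - q)
  have h3 : qint vv ((q : ℤ) + 1) ≠ 0 := by
    have := qint_ne_zero (p := q + 1) (by omega)
    rwa [show ((q + 1 : ℕ) : ℤ) = (q : ℤ) + 1 by push_cast; ring] at this
  field_simp

lemma qint_mul_w (q : ℕ) :
    qint vv ((q : ℤ) + 1) * (vv - vv⁻¹) = vv ^ (q + 1) - (vv ^ (q + 1))⁻¹ := by
  rw [qint_ofNat (q + 1) _ (by push_cast; ring), div_mul_cancel₀ _ hw]

lemma pow_shift (q m : ℕ) (h : q ≤ m) :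
    vv ^ q * vv ^ (2 * (m - q)) = vv ^ ((2 * m : ℕ) : ℤ) * vv ^ ((-1 : ℤ) * q) := by
  rw [← pow_add, ← zpow_natCast vv (q + 2 * (m - q)), ← zpow_add₀ hv]
  congr 1
  push_cast [Nat.sub_add_cancel]
  omega

lemma pow_shift' (q m : ℕ) (h : q ≤ m) :
    vv⁻¹ ^ q * vv⁻¹ ^ (2 * (m - q)) = vv ^ (-((2 * m : ℕ) : ℤ)) * vv ^ ((1 : ℤ) * q) := by
  rw [← pow_add, inv_pow, ← zpow_natCast vv (q + 2 * (m - q)), ← zpow_neg, ← zpow_add₀ hv]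
  congr 1
  push_cast
  omega


lemma sc0 (n : ℕ) (hn : 0 < n) :
    (∑ q ∈ Finset.range (2 * n + 1), (-1 : Kv) ^ (q + 1) * qbinom vv (2 * n + 1) (q + 1))
      + (-1 : Kv) ^ 0 * qbinom vv (2 * n + 1) 0 = 0 := by
  have h := qsum_eq_zero (2 * n + 1) 0 (by omega)
    (by rw [abs_le]; constructor <;> push_cast <;> omega) (by push_cast; omega)
  rw [qsum, Finset.sum_range_succ'] at h
  simpa using h

lemma sck (n : ℕ) (hn : 0 < n) :
    ∑ q ∈ Finset.range (2 * n + 1),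
      ((-1 : Kv) ^ (q + 1) * qbinom vv (2 * n + 1) (q + 1)) *
        ((vv ^ (q + 1) - (vv ^ (q + 1))⁻¹) * vv ^ q * vv ^ (2 * (2 * n - q))) = 0 := by
  have key : ∀ q ∈ Finset.range (2 * n + 1),
      ((-1 : Kv) ^ (q + 1) * qbinom vv (2 * n + 1) (q + 1)) *
        ((vv ^ (q + 1) - (vv ^ (q + 1))⁻¹) * vv ^ q * vv ^ (2 * (2 * n - q)))
      = (-(qint vv (((2 * n : ℕ) : ℤ) + 1) * (vv - vv⁻¹) * vv ^ (((2 * (2 * n) : ℕ)) : ℤ))) *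
          ((-1 : Kv) ^ q * vv ^ ((-1 : ℤ) * q) * qbinom vv (2 * n) q) := by
    intro q hq
    rw [Finset.mem_range] at hq
    have hq' : q ≤ 2 * n := by omega
    rw [← qint_mul_w q]
    linear_combination ((-1 : Kv) ^ (q + 1) * ((vv - vv⁻¹) * (vv ^ q * vv ^ (2 * (2 * n - q)))))
        * qbinom_mul_qint (2 * n) q hq'
      + ((-1 : Kv) ^ (q + 1) * qint vv (((2 * n : ℕ) : ℤ) + 1) * qbinom vv (2 * n) q
          * (vv - vv⁻¹)) * pow_shift q (2 * n) hq'
  rw [Finset.sum_congr rfl key, ← Finset.mul_sum]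
  have h := qsum_eq_zero (2 * n) (-1) (by omega)
    (by rw [abs_le]; constructor <;> push_cast <;> omega) (by push_cast; omega)
  rw [qsum] at h
  rw [h, mul_zero]

lemma sck' (n : ℕ) (hn : 0 < n) :
    ∑ q ∈ Finset.range (2 * n + 1),
      ((-1 : Kv) ^ (q + 1) * qbinom vv (2 * n + 1) (q + 1)) *
        ((vv ^ (q + 1) - (vv ^ (q + 1))⁻¹) * vv⁻¹ ^ q * vv⁻¹ ^ (2 * (2 * n - q))) = 0 := by
  have key : ∀ q ∈ Finset.range (2 * n + 1),
      ((-1 : Kv) ^ (q + 1) * qbinom vv (2 * n + 1) (q + 1)) *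
        ((vv ^ (q + 1) - (vv ^ (q + 1))⁻¹) * vv⁻¹ ^ q * vv⁻¹ ^ (2 * (2 * n - q)))
      = (-(qint vv (((2 * n : ℕ) : ℤ) + 1) * (vv - vv⁻¹) * vv ^ (-((2 * (2 * n) : ℕ) : ℤ)))) *
          ((-1 : Kv) ^ q * vv ^ ((1 : ℤ) * q) * qbinom vv (2 * n) q) := by
    intro q hq
    rw [Finset.mem_range] at hq
    have hq' : q ≤ 2 * n := by omega
    rw [← qint_mul_w q]
    linear_combination ((-1 : Kv) ^ (q + 1) * ((vv - vv⁻¹) * (vv⁻¹ ^ q * vv⁻¹ ^ (2 * (2 * n - q)))))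
        * qbinom_mul_qint (2 * n) q hq'
      + ((-1 : Kv) ^ (q + 1) * qint vv (((2 * n : ℕ) : ℤ) + 1) * qbinom vv (2 * n) q
          * (vv - vv⁻¹)) * pow_shift' q (2 * n) hq'
  rw [Finset.sum_congr rfl key, ← Finset.mul_sum]
  have h := qsum_eq_zero (2 * n) 1 (by omega)
    (by rw [abs_le]; constructor <;> push_cast <;> omega) (by push_cast; omega)
  rw [qsum] at h
  rw [h, mul_zero]

section SerreAbstract

variable {A : Type*} [Ring A] [Algebra Kv A]

lemma k_pow_e (u : Kv) (e k : A) (hke : k * e = (u ^ 2) • (e * k)) :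
    ∀ m : ℕ, k * e ^ m = (u ^ (2 * m)) • (e ^ m * k) := by
  intro m
  induction m with
  | zero => simp
  | succ s ih =>
    rw [pow_succ, ← mul_assoc, ih, smul_mul_assoc, mul_assoc, hke, mul_smul_comm, smul_smul]
    rw [show 2 * (s + 1) = 2 * s + 2 by ring, pow_add]
    rw [mul_assoc, pow_succ]

lemma k'_rel (e k k' : A) (hkk' : k * k' = 1) (hk'k : k' * k = 1)
    (hke : k * e = (vv ^ 2) • (e * k)) : k' * e = (vv⁻¹ ^ 2) • (e * k') := by
  have h1 : e * k = (vv⁻¹ ^ 2) • (k * e) := by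
    rw [hke, smul_smul, ← mul_pow, inv_mul_cancel₀ hv, one_pow, one_smul]
  calc k' * e = k' * ((e * k) * k') := by rw [mul_assoc e k k', hkk', mul_one]
    _ = k' * ((vv⁻¹ ^ 2) • (k * e) * k') := by rw [← h1]
    _ = (vv⁻¹ ^ 2) • (k' * (k * (e * k'))) := by
        rw [smul_mul_assoc, mul_smul_comm]
        simp only [mul_assoc]
    _ = (vv⁻¹ ^ 2) • (e * k') := by rw [← mul_assoc k' k, hk'k, one_mul]

set_option maxHeartbeats 1000000 in
lemma serre_abstract (n : ℕ) (hn : 0 < n) (e f k k' : A)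
    (hkk' : k * k' = 1) (hk'k : k' * k = 1)
    (hke : k * e = (vv ^ 2) • (e * k))
    (hef : (vv - vv⁻¹) • (e * f - f * e) = k - k') :
    ∑ p ∈ Finset.range (2 * n + 2),
      ((-1 : Kv) ^ p * qbinom vv (2 * n + 1) p) •
        (e ^ p * f * e ^ (2 * n + 1 - p)) = 0 := by
  have hk'e : k' * e = (vv⁻¹ ^ 2) • (e * k') := k'_rel e k k' hkk' hk'k hke
  have hk'pow : ∀ m : ℕ, k' * e ^ m = (vv⁻¹ ^ (2 * m)) • (e ^ m * k') :=
    k_pow_e vv⁻¹ e k' hk'e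
  have hkpow : ∀ m : ℕ, k * e ^ m = (vv ^ (2 * m)) • (e ^ m * k) := k_pow_e vv e k hke
  set w : Kv := vv - vv⁻¹ with hwdef
  have hww : w * w ≠ 0 := mul_ne_zero hw hw
  have h2' : w • (e * f) = w • (f * e) + k - k' := by
    rw [add_sub_assoc, ← hef, smul_sub]; abel
  -- commutation formula, cleared of denominators
  have comm2 : ∀ p : ℕ, (w * w) • (e ^ (p + 1) * f) = (w * w) • (f * e ^ (p + 1))
      + ((vv ^ (p + 1) - (vv ^ (p + 1))⁻¹) * vv ^ p) • (e ^ p * k)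
      - ((vv ^ (p + 1) - (vv ^ (p + 1))⁻¹) * vv⁻¹ ^ p) • (e ^ p * k') := by
    intro p
    induction p with
    | zero =>
      simp only [zero_add, pow_one, pow_zero, mul_one, one_mul]
      have h3 := congrArg (fun x : A => w • x) h2'
      simp only [smul_add, smul_sub, smul_smul] at h3
      rw [h3, ← hwdef]
    | succ s ih =>
      have step : (w * w) • (e ^ (s + 1 + 1) * f) = e * ((w * w) • (e ^ (s + 1) * f)) := by
        rw [mul_smul_comm, ← mul_assoc, ← pow_succ']
      have Bk : e * (((vv ^ (s+1) - (vv ^ (s+1))⁻¹) * vv ^ s) • (e ^ s * k))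
          = ((vv ^ (s+1) - (vv ^ (s+1))⁻¹) * vv ^ s) • (e ^ (s+1) * k) := by
        rw [mul_smul_comm, ← mul_assoc, ← pow_succ']
      have Bk' : e * (((vv ^ (s+1) - (vv ^ (s+1))⁻¹) * vv⁻¹ ^ s) • (e ^ s * k'))
          = ((vv ^ (s+1) - (vv ^ (s+1))⁻¹) * vv⁻¹ ^ s) • (e ^ (s+1) * k') := by
        rw [mul_smul_comm, ← mul_assoc, ← pow_succ']
      have C : e * ((w * w) • (f * e ^ (s + 1)))
          = w • (w • (f * e ^ (s + 1 + 1)) + (vv ^ (2 * (s+1))) • (e ^ (s+1) * k)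
              - (vv⁻¹ ^ (2 * (s+1))) • (e ^ (s+1) * k')) := by
        rw [mul_smul_comm, ← mul_assoc]
        rw [show (w * w) • ((e * f) * e ^ (s+1)) = w • ((w • (e * f)) * e ^ (s+1)) from by
          rw [smul_mul_assoc, smul_smul]]
        rw [h2', sub_mul, add_mul, smul_mul_assoc, mul_assoc, ← pow_succ',
          hkpow (s+1), hk'pow (s+1)]
      have c1 : w * vv ^ (2 * (s+1)) + (vv ^ (s+1) - (vv ^ (s+1))⁻¹) * vv ^ s
          = (vv ^ (s + 1 + 1) - (vv ^ (s + 1 + 1))⁻¹) * vv ^ (s + 1) := by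
        have hp1 : vv ^ (s+1) ≠ 0 := pow_ne_zero _ hv
        have hp2 : vv ^ (s+1+1) ≠ 0 := pow_ne_zero _ hv
        rw [hwdef]
        field_simp [hv]
        ring
      have c2 : w * vv⁻¹ ^ (2 * (s+1)) + (vv ^ (s+1) - (vv ^ (s+1))⁻¹) * vv⁻¹ ^ s
          = (vv ^ (s + 1 + 1) - (vv ^ (s + 1 + 1))⁻¹) * vv⁻¹ ^ (s + 1) := by
        have hp1 : vv ^ (s+1) ≠ 0 := pow_ne_zero _ hv
        have hp2 : vv ^ (s+1+1) ≠ 0 := pow_ne_zero _ hv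
        rw [hwdef, inv_pow, inv_pow, inv_pow]
        field_simp [hv]
        ring
      rw [step, ih, mul_sub, mul_add, C, Bk, Bk', ← c1, ← c2]
      simp only [smul_add, smul_sub, smul_smul, add_smul]
      abel
  -- main computation
  suffices hS : (w * w) • (∑ p ∈ Finset.range (2 * n + 2),
      ((-1 : Kv) ^ p * qbinom vv (2 * n + 1) p) •
        (e ^ p * f * e ^ (2 * n + 1 - p))) = 0 by
    exact (smul_eq_zero.mp hS).resolve_left hww
  rw [Finset.smul_sum, Finset.sum_range_succ']
  have key2 : ∀ q ∈ Finset.range (2 * n + 1),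
      (w * w) • (((-1 : Kv) ^ (q + 1) * qbinom vv (2 * n + 1) (q + 1)) •
          (e ^ (q + 1) * f * e ^ (2 * n + 1 - (q + 1))))
      = ((-1 : Kv) ^ (q + 1) * qbinom vv (2 * n + 1) (q + 1)) • ((w * w) • (f * e ^ (2 * n + 1)))
        + (((-1 : Kv) ^ (q + 1) * qbinom vv (2 * n + 1) (q + 1)) *
            ((vv ^ (q + 1) - (vv ^ (q + 1))⁻¹) * vv ^ q * vv ^ (2 * (2 * n - q)))) •
              (e ^ (2 * n) * k)
        - (((-1 : Kv) ^ (q + 1) * qbinom vv (2 * n + 1) (q + 1)) *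
            ((vv ^ (q + 1) - (vv ^ (q + 1))⁻¹) * vv⁻¹ ^ q * vv⁻¹ ^ (2 * (2 * n - q)))) •
              (e ^ (2 * n) * k') := by
    intro q hq
    rw [Finset.mem_range] at hq
    rw [show 2 * n + 1 - (q + 1) = 2 * n - q by omega]
    rw [smul_comm (w * w) ((-1 : Kv) ^ (q + 1) * qbinom vv (2 * n + 1) (q + 1))]
    rw [← smul_mul_assoc, comm2 q, sub_mul, add_mul,
      smul_mul_assoc, smul_mul_assoc, smul_mul_assoc]
    rw [mul_assoc (e ^ q) k, hkpow (2 * n - q), mul_smul_comm, ← mul_assoc (e ^ q)]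
    rw [mul_assoc (e ^ q) k', hk'pow (2 * n - q), mul_smul_comm, ← mul_assoc (e ^ q)]
    rw [mul_assoc f, ← pow_add e (q + 1) (2 * n - q), ← pow_add e q (2 * n - q),
      show q + 1 + (2 * n - q) = 2 * n + 1 by omega, show q + (2 * n - q) = 2 * n by omega]
    simp only [smul_add, smul_sub, smul_smul]
  rw [Finset.sum_congr rfl key2]
  rw [Finset.sum_sub_distrib, Finset.sum_add_distrib,
    ← Finset.sum_smul, ← Finset.sum_smul, ← Finset.sum_smul]
  rw [sck n hn, sck' n hn, zero_smul, zero_smul, sub_zero, add_zero]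
  simp only [pow_zero, one_mul, Nat.sub_zero]
  rw [smul_comm (w * w) (qbinom vv (2 * n + 1) 0)]
  rw [← add_smul]
  have h0 := sc0 n hn
  simp only [pow_zero, one_mul] at h0
  rw [h0, zero_smul]

end SerreAbstract

section Main

open RingQuot

/-- generator map U → V_n -/
noncomputable def genUV (n : ℕ) : UGen → RingQuot (VnRel n)
  | UGen.E => mkAlgHom Kv (VnRel n) (ι Kv VGen.Ep)
  | UGen.F => mkAlgHom Kv (VnRel n) (ι Kv VGen.Em)
  | UGen.K => mkAlgHom Kv (VnRel n) (ι Kv VGen.K)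
  | UGen.K' => mkAlgHom Kv (VnRel n) (ι Kv VGen.K')

/-- generator map V_n → U -/
noncomputable def genVU : VGen → RingQuot URel
  | VGen.Ep => mkAlgHom Kv URel (ι Kv UGen.E)
  | VGen.Em => mkAlgHom Kv URel (ι Kv UGen.F)
  | VGen.K => mkAlgHom Kv URel (ι Kv UGen.K)
  | VGen.K' => mkAlgHom Kv URel (ι Kv UGen.K')

lemma swap_rel' {A : Type*} [Ring A] [Algebra Kv A] (u : Kv) (hu : u ≠ 0)
    (e k k' : A) (hkk' : k * k' = 1) (hk'k : k' * k = 1)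
    (hke : k * e = (u ^ 2) • (e * k)) : k' * e = (u⁻¹ ^ 2) • (e * k') := by
  have h1 : e * k = (u⁻¹ ^ 2) • (k * e) := by
    rw [hke, smul_smul, ← mul_pow, inv_mul_cancel₀ hu, one_pow, one_smul]
  calc k' * e = k' * ((e * k) * k') := by rw [mul_assoc e k k', hkk', mul_one]
    _ = k' * ((u⁻¹ ^ 2) • (k * e) * k') := by rw [← h1]
    _ = (u⁻¹ ^ 2) • (k' * (k * (e * k'))) := by
        rw [smul_mul_assoc, mul_smul_comm]
        simp only [mul_assoc]
    _ = (u⁻¹ ^ 2) • (e * k') := by rw [← mul_assoc k' k, hk'k, one_mul]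

noncomputable abbrev uE : RingQuot URel := mkAlgHom Kv URel (ι Kv UGen.E)
noncomputable abbrev uF : RingQuot URel := mkAlgHom Kv URel (ι Kv UGen.F)
noncomputable abbrev uK : RingQuot URel := mkAlgHom Kv URel (ι Kv UGen.K)
noncomputable abbrev uK' : RingQuot URel := mkAlgHom Kv URel (ι Kv UGen.K')

lemma u_kk' : uK * uK' = 1 := by
  have := RingQuot.mkAlgHom_rel Kv URel.KK'
  simpa [map_mul, map_one] using this

lemma u_k'k : uK' * uK = 1 := by
  have := RingQuot.mkAlgHom_rel Kv URel.K'K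
  simpa [map_mul, map_one] using this

lemma u_ke : uK * uE = (vv ^ 2) • (uE * uK) := by
  have := RingQuot.mkAlgHom_rel Kv URel.KE
  simpa [map_mul, map_smul] using this

lemma u_kf : uK * uF = (vv⁻¹ ^ 2) • (uF * uK) := by
  have := RingQuot.mkAlgHom_rel Kv URel.KF
  simpa [map_mul, map_smul] using this

lemma u_ef : (vv - vv⁻¹) • (uE * uF - uF * uE) = uK - uK' := by
  have := RingQuot.mkAlgHom_rel Kv URel.EF
  simpa [map_mul, map_smul, map_sub] using this

lemma u_k'f : uK' * uF = (vv ^ 2) • (uF * uK') := by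
  have h := swap_rel' vv⁻¹ (inv_ne_zero hv) uF uK uK' u_kk' u_k'k u_kf
  simpa [inv_inv] using h

lemma u_fe : (vv - vv⁻¹) • (uF * uE - uE * uF) = uK' - uK := by
  rw [← neg_sub (uE * uF) (uF * uE), smul_neg, u_ef, neg_sub]

/-- map FreeAlgebra VGen → RingQuot URel respects VnRel -/
lemma genVU_resp (n : ℕ) (hn : 0 < n) :
    ∀ ⦃x y⦄, VnRel n x y →
      (FreeAlgebra.lift Kv genVU) x = (FreeAlgebra.lift Kv genVU) y := by
  intro x y h
  induction h with
  | KK' => simpa [genVU] using u_kk'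
  | K'K => simpa [genVU] using u_k'k
  | KE => simpa [genVU] using u_ke
  | KF => simpa [genVU] using u_kf
  | EF => simpa [genVU] using u_ef
  | serreA =>
    simpa [genVU] using
      serre_abstract n hn uE uF uK uK' u_kk' u_k'k u_ke u_ef
  | serreB =>
    simpa [genVU] using
      serre_abstract n hn uF uE uK' uK u_k'k u_kk' u_k'f u_fe

lemma genUV_resp (n : ℕ) :
    ∀ ⦃x y⦄, URel x y →
      (FreeAlgebra.lift Kv (genUV n)) x = (FreeAlgebra.lift Kv (genUV n)) y := by
  intro x y h
  induction h with
  | KK' => simpa [genUV] using (by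
      have := RingQuot.mkAlgHom_rel Kv (VnRel.KK' (n := n))
      simpa [map_mul, map_one] using this)
  | K'K => simpa [genUV] using (by
      have := RingQuot.mkAlgHom_rel Kv (VnRel.K'K (n := n))
      simpa [map_mul, map_one] using this)
  | KE => simpa [genUV] using (by
      have := RingQuot.mkAlgHom_rel Kv (VnRel.KE (n := n))
      simpa [map_mul, map_smul] using this)
  | KF => simpa [genUV] using (by
      have := RingQuot.mkAlgHom_rel Kv (VnRel.KF (n := n))
      simpa [map_mul, map_smul] using this)
  | EF => simpa [genUV] using (by
      have := RingQuot.mkAlgHom_rel Kv (VnRel.EF (n := n))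
      simpa [map_mul, map_smul, map_sub] using this)

noncomputable def phi0 (n : ℕ) : RingQuot URel →ₐ[Kv] RingQuot (VnRel n) :=
  RingQuot.liftAlgHom Kv ⟨FreeAlgebra.lift Kv (genUV n), genUV_resp n⟩

noncomputable def psi0 (n : ℕ) (hn : 0 < n) : RingQuot (VnRel n) →ₐ[Kv] RingQuot URel :=
  RingQuot.liftAlgHom Kv ⟨FreeAlgebra.lift Kv genVU, genVU_resp n hn⟩

lemma phi0_gen (n : ℕ) (g : UGen) :
    phi0 n (mkAlgHom Kv URel (ι Kv g)) = genUV n g := by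
  rw [phi0, RingQuot.liftAlgHom_mkAlgHom_apply, FreeAlgebra.lift_ι_apply]

lemma psi0_gen (n : ℕ) (hn : 0 < n) (g : VGen) :
    psi0 n hn (mkAlgHom Kv (VnRel n) (ι Kv g)) = genVU g := by
  rw [psi0, RingQuot.liftAlgHom_mkAlgHom_apply, FreeAlgebra.lift_ι_apply]

end Main

/-- For every positive integer n there is a unique ℚ(v)-algebra
isomorphism φ : U(sl₂) → V_n with φ(E) = E⁺, φ(F) = E⁻, φ(K) = K, φ(K') = K'. -/
theorem stmt13 (n : ℕ) (hn : 0 < n) :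
    ∃! φ : RingQuot URel ≃ₐ[Kv] RingQuot (VnRel n),
      φ (RingQuot.mkAlgHom Kv URel (ι Kv UGen.E)) =
          RingQuot.mkAlgHom Kv (VnRel n) (ι Kv VGen.Ep) ∧
      φ (RingQuot.mkAlgHom Kv URel (ι Kv UGen.F)) =
          RingQuot.mkAlgHom Kv (VnRel n) (ι Kv VGen.Em) ∧
      φ (RingQuot.mkAlgHom Kv URel (ι Kv UGen.K)) =
          RingQuot.mkAlgHom Kv (VnRel n) (ι Kv VGen.K) ∧
      φ (RingQuot.mkAlgHom Kv URel (ι Kv UGen.K')) =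
          RingQuot.mkAlgHom Kv (VnRel n) (ι Kv VGen.K') := by
  have hcomp1 : (psi0 n hn).comp (phi0 n) = AlgHom.id Kv (RingQuot URel) := by
    apply RingQuot.ringQuot_ext'
    apply FreeAlgebra.hom_ext
    funext g
    cases g <;>
      simp [Function.comp, phi0_gen, psi0_gen, genUV, genVU]
  have hcomp2 : (phi0 n).comp (psi0 n hn) = AlgHom.id Kv (RingQuot (VnRel n)) := by
    apply RingQuot.ringQuot_ext'
    apply FreeAlgebra.hom_ext
    funext g
    cases g <;>
      simp [Function.comp, phi0_gen, psi0_gen, genUV, genVU]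
  let Φ : RingQuot URel ≃ₐ[Kv] RingQuot (VnRel n) :=
    AlgEquiv.ofAlgHom (phi0 n) (psi0 n hn) hcomp2 hcomp1
  have hA : Φ (RingQuot.mkAlgHom Kv URel (ι Kv UGen.E)) =
      RingQuot.mkAlgHom Kv (VnRel n) (ι Kv VGen.Ep) := by
    show phi0 n _ = _
    rw [phi0_gen]; rfl
  have hB : Φ (RingQuot.mkAlgHom Kv URel (ι Kv UGen.F)) =
      RingQuot.mkAlgHom Kv (VnRel n) (ι Kv VGen.Em) := by
    show phi0 n _ = _
    rw [phi0_gen]; rfl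
  have hC : Φ (RingQuot.mkAlgHom Kv URel (ι Kv UGen.K)) =
      RingQuot.mkAlgHom Kv (VnRel n) (ι Kv VGen.K) := by
    show phi0 n _ = _
    rw [phi0_gen]; rfl
  have hD : Φ (RingQuot.mkAlgHom Kv URel (ι Kv UGen.K')) =
      RingQuot.mkAlgHom Kv (VnRel n) (ι Kv VGen.K') := by
    show phi0 n _ = _
    rw [phi0_gen]; rfl
  refine ⟨Φ, ⟨hA, hB, hC, hD⟩, ?_⟩
  rintro ψ ⟨h1, h2, h3, h4⟩
  have key : (ψ : RingQuot URel →ₐ[Kv] RingQuot (VnRel n)) = (Φ : RingQuot URel →ₐ[Kv] RingQuot (VnRel n)) := by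
    apply RingQuot.ringQuot_ext'
    apply FreeAlgebra.hom_ext
    funext g
    cases g <;>
      simp only [AlgHom.coe_comp, Function.comp_apply, AlgHom.coe_coe, AlgEquiv.coe_toAlgHom] <;>
      [rw [h1, hA]; rw [h2, hB]; rw [h3, hC]; rw [h4, hD]]
  apply AlgEquiv.ext
  intro x
  exact AlgHom.congr_fun key x
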